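/- Let E ⊆ ℝ be measurable with upper Banach density D*(E) > 0, where D*(E) = limsup_{(N−M)→∞} m(E ∩ [M,N])/(N−M). Define φ : ℝ → ℝ by φ(s) = min{1, dist(s,E)}, let X be the closure of {φ(·+t) : t ∈ ℝ} in the topology of uniform convergence on compact sets, with flow T_tψ(s) = ψ(s+t), and let Ẽ = {ψ ∈ X : ψ(0) = 0}. If ν is any weak-* limit of the measures μ_n(f) = (1/m(S_n)) ∫_{S_n} f(T_tφ) dt along intervals S_n with m(S_n ∩ E)/m(S_n) → D*(E), then ν(Ẽ) ≥ D*(E). -/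

import Mathlib

open MeasureTheory Filter
open scoped ENNReal

/-- Upper Banach density of a set of reals:
`D*(E) = limsup_{(N-M)→∞} m(E ∩ [M,N])/(N-M)`. -/
noncomputable def upperBanachDensity (E : Set ℝ) : ℝ :=
  Filter.limsup (fun p : ℝ × ℝ => (volume (E ∩ Set.Icc p.1 p.2)).toReal / (p.2 - p.1))
    (Filter.comap (fun p : ℝ × ℝ => p.2 - p.1) Filter.atTop)

/-- The function `φ(s) = min {1, dist(s, E)}`, as a continuous map. -/
noncomputable def phiE (E : Set ℝ) : C(ℝ, ℝ) :=
  ⟨fun s => min 1 (Metric.infDist s E),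
    continuous_const.min (Metric.continuous_infDist_pt E)⟩

/-- The translation flow on `C(ℝ, ℝ)`: `(T_t ψ)(s) = ψ(s + t)`. -/
noncomputable def translateFlow (t : ℝ) (ψ : C(ℝ, ℝ)) : C(ℝ, ℝ) :=
  ψ.comp ⟨fun s => s + t, by continuity⟩

/-- **Correspondence principle, lower bound lemma.**  Let `E ⊆ ℝ` be measurable with
`D*(E) > 0`, let `φ(s) = min{1, dist(s, E)}`, and let `ν` be a weak-* limit of the measures
`μ_n(f) = (1/m(S_n)) ∫_{S_n} f(T_t φ) dt` along intervals `S_n = [a_n, b_n]` with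
`m(S_n ∩ E)/m(S_n) → D*(E)`.  Then `ν({ψ : ψ(0) = 0}) ≥ D*(E)`. -/
theorem correspondence_weak_star_limit_lower_bound
    [MeasurableSpace C(ℝ, ℝ)] [BorelSpace C(ℝ, ℝ)]
    (E : Set ℝ) (hEmeas : MeasurableSet E)
    (hpos : 0 < upperBanachDensity E)
    (a b : ℕ → ℝ) (hab : ∀ n, a n < b n)
    (hdens : Tendsto
      (fun n => (volume (E ∩ Set.Icc (a n) (b n))).toReal / (b n - a n))
      atTop (nhds (upperBanachDensity E)))
    (ν : Measure C(ℝ, ℝ)) [IsProbabilityMeasure ν]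
    (hν : ∀ f : C(ℝ, ℝ) → ℝ, Continuous f → (∃ C : ℝ, ∀ ψ, |f ψ| ≤ C) →
      Tendsto
        (fun n => (b n - a n)⁻¹ *
          ∫ t in Set.Icc (a n) (b n), f (translateFlow t (phiE E)))
        atTop (nhds (∫ ψ, f ψ ∂ν))) :
    ENNReal.ofReal (upperBanachDensity E) ≤ ν {ψ : C(ℝ, ℝ) | ψ 0 = 0} := by

  set D := upperBanachDensity E with hD
  set S : Set C(ℝ, ℝ) := {ψ : C(ℝ, ℝ) | ψ 0 = 0} with hSdef
  have hSclosed : IsClosed S :=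
    isClosed_eq (continuous_eval_const 0) continuous_const
  have hSmeas : MeasurableSet S := hSclosed.measurableSet
  set f : ℕ → C(ℝ, ℝ) → ℝ := fun k ψ => max 0 (1 - (k : ℝ) * |ψ 0|) with hfdef
  have hfc : ∀ k, Continuous (f k) := fun k =>
    continuous_const.max (continuous_const.sub
      (continuous_const.mul (continuous_eval_const 0).abs))
  have hfb : ∀ k ψ, |f k ψ| ≤ 1 := by
    intro k ψ
    rw [abs_of_nonneg (le_max_left _ _)]
    refine max_le zero_le_one ?_
    have h1 : (0:ℝ) ≤ (k : ℝ) * |ψ 0| :=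
      mul_nonneg (Nat.cast_nonneg k) (abs_nonneg _)
    linarith
  -- value of f k along the orbit
  have horbit : ∀ k (t : ℝ), f k (translateFlow t (phiE E))
      = max 0 (1 - (k : ℝ) * |min 1 (Metric.infDist t E)|) := by
    intro k t
    simp [hfdef, translateFlow, phiE, ContinuousMap.comp_apply]
  have key : ∀ k, D ≤ ∫ ψ, f k ψ ∂ν := by
    intro k
    have hT := hν (f k) (hfc k) ⟨1, hfb k⟩
    refine le_of_tendsto_of_tendsto' hdens hT ?_
    intro n
    have hsub : (0:ℝ) < b n - a n := sub_pos.mpr (hab n)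
    have hIcc : MeasurableSet (Set.Icc (a n) (b n)) := measurableSet_Icc
    have hIccfin : volume (Set.Icc (a n) (b n)) < ⊤ := measure_Icc_lt_top
    -- integrability of the indicator of E
    have hind : IntegrableOn (E.indicator (fun _ => (1:ℝ)))
        (Set.Icc (a n) (b n)) volume := by
      refine Integrable.indicator ?_ hEmeas
      exact (integrableOn_const_iff).mpr (Or.inr hIccfin)
    -- integrability of f k along orbit
    have hcontorb : Continuous fun t => f k (translateFlow t (phiE E)) := by
      have : (fun t => f k (translateFlow t (phiE E)))
          = fun t => max 0 (1 - (k : ℝ) * |min 1 (Metric.infDist t E)|) := by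
        funext t; exact horbit k t
      rw [this]
      exact continuous_const.max (continuous_const.sub (continuous_const.mul
        (continuous_const.min (Metric.continuous_infDist_pt E)).abs))
    have horbint : IntegrableOn (fun t => f k (translateFlow t (phiE E)))
        (Set.Icc (a n) (b n)) volume := hcontorb.integrableOn_Icc
    -- pointwise comparison
    have hptwise : ∀ t ∈ Set.Icc (a n) (b n),
        E.indicator (fun _ => (1:ℝ)) t ≤ f k (translateFlow t (phiE E)) := by
      intro t _
      rw [horbit k t]
      by_cases ht : t ∈ E
      · rw [Set.indicator_of_mem ht]
        have h0 : Metric.infDist t E = 0 := Metric.infDist_zero_of_mem ht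
        rw [h0]
        simp
      · rw [Set.indicator_of_notMem ht]
        exact le_max_left _ _
    have hintmono : ∫ t in Set.Icc (a n) (b n), E.indicator (fun _ => (1:ℝ)) t
        ≤ ∫ t in Set.Icc (a n) (b n), f k (translateFlow t (phiE E)) :=
      MeasureTheory.setIntegral_mono_on hind horbint hIcc hptwise
    have hindval : ∫ t in Set.Icc (a n) (b n), E.indicator (fun _ => (1:ℝ)) t
        = (volume (E ∩ Set.Icc (a n) (b n))).toReal := by
      rw [MeasureTheory.setIntegral_indicator hEmeas]
      rw [MeasureTheory.setIntegral_const]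
      rw [Set.inter_comm]
      simp
      rfl
    rw [div_eq_inv_mul]
    have hinv : (0:ℝ) ≤ (b n - a n)⁻¹ := inv_nonneg.mpr hsub.le
    calc (b n - a n)⁻¹ * (volume (E ∩ Set.Icc (a n) (b n))).toReal
        = (b n - a n)⁻¹ * ∫ t in Set.Icc (a n) (b n),
            E.indicator (fun _ => (1:ℝ)) t := by rw [hindval]
      _ ≤ (b n - a n)⁻¹ * ∫ t in Set.Icc (a n) (b n),
            f k (translateFlow t (phiE E)) := by
          exact mul_le_mul_of_nonneg_left hintmono hinv
  -- dominated convergence to the indicator of S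
  have hlim : Tendsto (fun k => ∫ ψ, f k ψ ∂ν) atTop
      (nhds (∫ ψ, S.indicator (fun _ => (1:ℝ)) ψ ∂ν)) := by
    refine MeasureTheory.tendsto_integral_of_dominated_convergence
      (fun _ => (1:ℝ)) (fun k => (hfc k).aestronglyMeasurable)
      (integrable_const 1) (fun k => ?_) ?_
    · exact Filter.Eventually.of_forall fun ψ => by
        simpa [Real.norm_eq_abs] using hfb k ψ
    · refine Filter.Eventually.of_forall fun ψ => ?_
      by_cases hψ : ψ 0 = 0
      · have : ∀ k, f k ψ = 1 := by intro k; simp [hfdef, hψ]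
        simp only [this]
        have hmem : ψ ∈ S := hψ
        rw [Set.indicator_of_mem hmem]
        exact tendsto_const_nhds
      · have hmem : ψ ∉ S := hψ
        rw [Set.indicator_of_notMem hmem]
        have habs : (0:ℝ) < |ψ 0| := abs_pos.mpr hψ
        have hT : Tendsto (fun k : ℕ => (k : ℝ) * |ψ 0|) atTop atTop :=
          Tendsto.atTop_mul_const habs tendsto_natCast_atTop_atTop
        have hev : ∀ᶠ k in atTop, f k ψ = 0 := by
          filter_upwards [hT.eventually_ge_atTop 1] with k hk
          simp only [hfdef]
          exact max_eq_left (by linarith)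
        exact Tendsto.congr' (hev.mono fun k hk => hk.symm) tendsto_const_nhds
  have hindint : ∫ ψ, S.indicator (fun _ => (1:ℝ)) ψ ∂ν = (ν S).toReal := by
    exact MeasureTheory.integral_indicator_one (μ := ν) hSmeas
  rw [hindint] at hlim
  have hfinal : D ≤ (ν S).toReal :=
    le_of_tendsto_of_tendsto' tendsto_const_nhds hlim key
  exact ENNReal.ofReal_le_of_le_toReal hfinal
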